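/- Let ρ and σ be density matrices on ℂ^d, viewed as bipartite states with trivial system B (dB = 1). Then R_{T,p}(σ) ≤ R_{T,p}(ρ) for every gambling game (T,p) if and only if the eigenvalue vector of σ is majorized by that of ρ, i.e. λ(σ) ≺ λ(ρ). -/

import Mathlib

open Matrix Kronecker
open scoped ComplexOrder

noncomputable section

open scoped Classical

/-- Square complex matrices of size `n`. -/
abbrev Mat (n : ℕ) := Matrix (Fin n) (Fin n) ℂ

/-- Bipartite matrices on `ℂ^a ⊗ ℂ^b`. -/
abbrev BMat (a b : ℕ) := Matrix (Fin a × Fin b) (Fin a × Fin b) ℂ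

/-- A density matrix: positive semidefinite with trace one. -/
def IsDensity {ι : Type} [Fintype ι] (ρ : Matrix ι ι ℂ) : Prop :=
  ρ.PosSemidef ∧ ρ.trace = 1

/-- The maximally mixed state `I/n`. -/
def uMat (n : ℕ) : Mat n := (n : ℂ)⁻¹ • 1

/-- Choi matrix of a map on matrices. -/
def choi {ι κ : Type} [Fintype ι] [DecidableEq ι]
    (Φ : Matrix ι ι ℂ → Matrix κ κ ℂ) : Matrix (ι × κ) (ι × κ) ℂ :=
  fun p q => Φ (Matrix.single p.1 q.1 1) p.2 q.2

/-- Quantum channel: linear, trace preserving, completely positive map. -/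
def IsCPTP {ι κ : Type} [Fintype ι] [DecidableEq ι] [Fintype κ]
    (Φ : Matrix ι ι ℂ → Matrix κ κ ℂ) : Prop :=
  IsLinearMap ℂ Φ ∧ (∀ X, (Φ X).trace = X.trace) ∧ (choi Φ).PosSemidef

/-- Completely positive (not necessarily trace-preserving) map. -/
def IsCP {ι κ : Type} [Fintype ι] [DecidableEq ι] [Fintype κ]
    (Φ : Matrix ι ι ℂ → Matrix κ κ ℂ) : Prop :=
  IsLinearMap ℂ Φ ∧ (choi Φ).PosSemidef

/-- Partial trace over the first tensor factor. -/
def ptraceA {α β : Type} [Fintype α] (M : Matrix (α × β) (α × β) ℂ) :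
    Matrix β β ℂ := fun j j' => ∑ i, M (i, j) (i, j')

/-- Partial trace over the second tensor factor. -/
def ptraceB {α β : Type} [Fintype β] (M : Matrix (α × β) (α × β) ℂ) :
    Matrix α α ℂ := fun i i' => ∑ j, M (i, j) (i', j)

/-- The map `Φ ⊗ id` acting on the first tensor factor. -/
def lTensorId {α α' β : Type} (Φ : Matrix α α ℂ → Matrix α' α' ℂ)
    (X : Matrix (α × β) (α × β) ℂ) : Matrix (α' × β) (α' × β) ℂ :=
  fun p q => Φ (fun k k' => X (k, p.2) (k', q.2)) p.1 q.1

/-- The map `id ⊗ Φ` acting on the second tensor factor. -/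
def rTensorId {α β β' : Type} (Φ : Matrix β β ℂ → Matrix β' β' ℂ)
    (X : Matrix (α × β) (α × β) ℂ) : Matrix (α × β') (α × β') ℂ :=
  fun p q => Φ (fun k k' => X (p.1, k) (q.1, k')) p.2 q.2

/-- `A ↛ B'` semi-causality of a bipartite channel. -/
def SemiCausal {a b b' : ℕ} (N : BMat a b → BMat a b') : Prop :=
  ∀ M : Mat a → Mat a, IsCPTP M →
    ∀ X : BMat a b, ptraceA (N (lTensorId M X)) = ptraceA (N X)

/-- Conditional unitality of a bipartite channel. -/
def CondUnital {a b b' : ℕ} (N : BMat a b → BMat a b') : Prop :=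
  ∀ ρ : Mat b, IsDensity ρ →
    ∃ σ : Mat b', IsDensity σ ∧ N (uMat a ⊗ₖ ρ) = uMat a ⊗ₖ σ

/-- Conditionally unital semi-causal channels. -/
def CUSC {a b b' : ℕ} (N : BMat a b → BMat a b') : Prop :=
  IsCPTP N ∧ CondUnital N ∧ SemiCausal N

/-- The channel `X ↦ V X V†` associated with a matrix `V`. -/
def isomChannel {a a' : ℕ} (V : Matrix (Fin a') (Fin a) ℂ) (X : Mat a) : Mat a' :=
  V * X * Vᴴ

/-- Conditional majorization `σ ≾_A ρ`. -/
def CondMajor {a' b' a b : ℕ} (σ : BMat a' b') (ρ : BMat a b) : Prop :=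
  (a ≤ a' ∧ ∃ V : Matrix (Fin a') (Fin a) ℂ, Vᴴ * V = 1 ∧
      ∃ N : BMat a b → BMat a b', CUSC N ∧ σ = lTensorId (isomChannel V) (N ρ)) ∨
  (a' ≤ a ∧ ∃ U : Matrix (Fin a) (Fin a') ℂ, Uᴴ * U = 1 ∧
      ∃ N : BMat a b → BMat a b', CUSC N ∧ lTensorId (isomChannel U) σ = N ρ)

/-- The tensor product `ρ_{AB} ⊗ τ_{A'B'}` regrouped as a state on `(AA')(BB')`. -/
def prodState {a b a' b' : ℕ} (ρ : BMat a b) (τ : BMat a' b') :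
    BMat (a * a') (b * b') := fun p q =>
  ρ ((finProdFinEquiv.symm p.1).1, (finProdFinEquiv.symm p.2).1)
    ((finProdFinEquiv.symm q.1).1, (finProdFinEquiv.symm q.2).1) *
  τ ((finProdFinEquiv.symm p.1).2, (finProdFinEquiv.symm p.2).2)
    ((finProdFinEquiv.symm q.1).2, (finProdFinEquiv.symm q.2).2)

/-- A conditional entropy: a real function on bipartite density matrices of all
finite dimensions, monotone under conditional majorization, additive under tensor
products, and normalized to `1` on the one-qubit maximally mixed state. -/
structure CondEntropy where
  H : ∀ {a b : ℕ}, BMat a b → ℝ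
  mono : ∀ {a b a' b' : ℕ} (ρ : BMat a b) (σ : BMat a' b'),
    IsDensity ρ → IsDensity σ → CondMajor σ ρ → H ρ ≤ H σ
  additive : ∀ {a b a' b' : ℕ} (ρ : BMat a b) (τ : BMat a' b'),
    IsDensity ρ → IsDensity τ → H (prodState ρ τ) = H ρ + H τ
  normalized : H (uMat 2 ⊗ₖ (1 : Mat 1)) = 1

/-- Maximally entangled state `φ⁺` on `ℂ^d ⊗ ℂ^d`. -/
def maxEnt (d : ℕ) : BMat d d :=
  fun p q => if p.1 = p.2 ∧ q.1 = q.2 then (d : ℂ)⁻¹ else 0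

/-- The sum of the `k` largest values of `f`. -/
def sumTopK {ι : Type} [Fintype ι] [DecidableEq ι] (k : ℕ) (f : ι → ℝ) : ℝ :=
  (Finset.univ.powerset.filter fun s : Finset ι => s.card ≤ k).sup'
    ⟨∅, Finset.mem_filter.mpr ⟨Finset.mem_powerset.mpr (Finset.empty_subset _), by simp⟩⟩
    fun s => ∑ i ∈ s, f i

/-- Ky Fan `k`-norm (sum of the `k` largest eigenvalues) of a hermitian matrix. -/
def kyFan {ι : Type} [Fintype ι] [DecidableEq ι] (k : ℕ) (X : Matrix ι ι ℂ) : ℝ :=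
  if h : X.IsHermitian then sumTopK k h.eigenvalues else 0

/-- The rank-one projector `|v⟩⟨v|`. -/
def projv {n : ℕ} (v : Fin n → ℂ) : Mat n := fun i j => v i * star (v j)

/-- A rank-one projective measurement, given by an orthonormal family of vectors. -/
def IsRankOneMeas {n : ℕ} (u : Fin n → Fin n → ℂ) : Prop :=
  ∀ z z', (∑ i, star (u z i) * u z' i) = if z = z' then 1 else 0

/-- A column-stochastic matrix. -/
def ColStochastic {a c : ℕ} (T : Matrix (Fin a) (Fin c) ℝ) : Prop :=
  (∀ w z, 0 ≤ T w z) ∧ ∀ z, ∑ w, T w z = 1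

/-- Reward of the bipartite gambling game `(T, 0)` (no adversary). -/
def R0 {a b c : ℕ} (T : Matrix (Fin a) (Fin c) ℝ) (ρ : BMat a b) : ℝ :=
  ⨆ u : {u : Fin b → Fin b → ℂ // IsRankOneMeas u}, ⨆ f : Fin b → Fin c,
    ∑ z, ∑ w, T w (f z) *
      kyFan (w.1 + 1)
        (ptraceB (((1 : Mat a) ⊗ₖ projv (u.1 z)) * ρ * ((1 : Mat a) ⊗ₖ projv (u.1 z))))

/-- Reward of the bipartite gambling game `(T, p)`. -/
def Rgame {a b c : ℕ} (T : Matrix (Fin a) (Fin c) ℝ) (p : ℝ) (ρ : BMat a b) : ℝ :=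
  p * (⨅ v : {v : Fin a → Fin a → ℂ // IsRankOneMeas v},
        R0 T (∑ j, (projv (v.1 j) ⊗ₖ (1 : Mat b)) * ρ * (projv (v.1 j) ⊗ₖ (1 : Mat b)))) +
  (1 - p) * R0 T ρ

/-- Reward of a quantum-channel gambling game `ρ_{ABX} = Σ_x p_x ρ^{(x)}_{AB} ⊗ |x⟩⟨x|`
for a channel `N` with output system `A`. -/
def Rch {n m dA b ℓ : ℕ} (N : Mat n → Mat m)
    (p : Fin ℓ → ℝ) (ρx : Fin ℓ → BMat dA b) : ℝ :=
  ⨆ E : {E : Mat dA → Mat n // IsCPTP E},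
    ∑ x, p x * kyFan (x.1 + 1) (lTensorId (fun Y => N (E.1 Y)) (ρx x))

/-- The classical channel induced by a column-stochastic transition matrix. -/
def classicalChannel {x y : ℕ} (P : Matrix (Fin y) (Fin x) ℝ) : Mat x → Mat y :=
  fun ρ => Matrix.of fun i j => if i = j then ∑ k, (P i k : ℂ) * ρ k k else 0

/-- Classical game reward `Prob_T` of a classical channel with transition matrix `P`. -/
def ProbT {yd xd wn zn : ℕ} (P : Matrix (Fin yd) (Fin xd) ℝ)
    (T : Matrix (Fin wn) (Fin zn) ℝ) : ℝ :=
  ∑ z, ⨆ x : Fin xd, ∑ w, T w z * sumTopK (w.1 + 1) (fun i => P i x)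

/-- A joint probability matrix. -/
def JointProb {m n : ℕ} (P : Matrix (Fin m) (Fin n) ℝ) : Prop :=
  (∀ x y, 0 ≤ P x y) ∧ ∑ x, ∑ y, P x y = 1

/-- A row-stochastic matrix. -/
def RowStochastic {n n' : ℕ} (t : Matrix (Fin n) (Fin n') ℝ) : Prop :=
  (∀ y w, 0 ≤ t y w) ∧ ∀ y, ∑ w, t y w = 1

/-- A doubly stochastic matrix. -/
def IsDoublyStochastic {m : ℕ} (d : Matrix (Fin m) (Fin m) ℝ) : Prop :=
  (∀ i j, 0 ≤ d i j) ∧ (∀ i, ∑ j, d i j = 1) ∧ (∀ j, ∑ i, d i j = 1)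

/-- The quantum channel induced by a (doubly) stochastic matrix. -/
def dsChannel {m : ℕ} (d : Matrix (Fin m) (Fin m) ℝ) : Mat m → Mat m :=
  fun ρ => Matrix.of fun x x' => if x = x' then ∑ y, (d x y : ℂ) * ρ y y else 0

/-- Diagonal bipartite state associated with a joint probability matrix. -/
def classicalState {m n : ℕ} (P : Matrix (Fin m) (Fin n) ℝ) : BMat m n :=
  Matrix.of fun p q => if p = q then (P p.1 p.2 : ℂ) else 0

/-- von Neumann entropy `S(ρ) = -Σ λ_i log₂ λ_i`. -/
def vnEntropy {ι : Type} [Fintype ι] [DecidableEq ι] (ρ : Matrix ι ι ℂ) : ℝ :=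
  if h : ρ.IsHermitian then -∑ i, h.eigenvalues i * Real.logb 2 (h.eigenvalues i) else 0

/-- von Neumann conditional entropy `H(A|B) = S(ρ_AB) - S(ρ_B)`. -/
def condVN {a b : ℕ} (ρ : BMat a b) : ℝ := vnEntropy ρ - vnEntropy (ptraceA ρ)

/-- Classical game reward for a classical bipartite state with joint distribution `q`
(`y` on `A`, `z` on `B`). -/
def ProbTstate {a b c : ℕ} (T : Matrix (Fin a) (Fin c) ℝ)
    (q : Matrix (Fin a) (Fin b) ℝ) : ℝ :=
  ∑ z, ⨆ z' : Fin c, ∑ w, T w z' * sumTopK (w.1 + 1) (fun y => q y z)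


section AuxSum
variable {ι : Type} [Fintype ι] [DecidableEq ι]

lemma le_sumTopK (k : ℕ) (f : ι → ℝ) {s : Finset ι} (hs : s.card ≤ k) :
    ∑ i ∈ s, f i ≤ sumTopK k f :=
  Finset.le_sup' (fun s => ∑ i ∈ s, f i) (Finset.mem_filter.mpr
    ⟨Finset.mem_powerset.mpr (Finset.subset_univ s), hs⟩)

lemma sumTopK_le (k : ℕ) (f : ι → ℝ) {b : ℝ}
    (h : ∀ s : Finset ι, s.card ≤ k → ∑ i ∈ s, f i ≤ b) : sumTopK k f ≤ b :=
  Finset.sup'_le _ _ fun s hs => h s (Finset.mem_filter.mp hs).2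

lemma sumTopK_zero (f : ι → ℝ) : sumTopK 0 f = 0 := by
  refine le_antisymm (sumTopK_le 0 f fun s hs => ?_) ?_
  · have : s = ∅ := Finset.card_eq_zero.mp (Nat.le_zero.mp hs)
    simp [this]
  · simpa using le_sumTopK 0 f (s := ∅) (by simp)

lemma sumTopK_le_sum (k : ℕ) (f : ι → ℝ) (hf : ∀ i, 0 ≤ f i) :
    sumTopK k f ≤ ∑ i, f i :=
  sumTopK_le k f fun s _ => Finset.sum_le_sum_of_subset_of_nonneg (Finset.subset_univ s)
    (fun i _ _ => hf i)

lemma sum_le_sumTopK (k : ℕ) (f : ι → ℝ) (h : Fintype.card ι ≤ k) :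
    ∑ i, f i ≤ sumTopK k f :=
  le_sumTopK k f (by simpa using h)

lemma sumTopK_const (k : ℕ) {a : ℝ} (ha : 0 ≤ a) :
    sumTopK k (fun _ : ι => a) = (min k (Fintype.card ι) : ℕ) * a := by
  refine le_antisymm (sumTopK_le _ _ fun s hs => ?_) ?_
  · rw [Finset.sum_const, nsmul_eq_mul]
    have : s.card ≤ min k (Fintype.card ι) :=
      le_min hs (by simpa using Finset.card_le_univ s)
    exact mul_le_mul_of_nonneg_right (by exact_mod_cast this) ha
  · obtain ⟨s, -, hcard⟩ := Finset.exists_subset_card_eq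
      (s := (Finset.univ : Finset ι)) (n := min k (Fintype.card ι))
      (by simp [Finset.card_univ])
    have := le_sumTopK k (fun _ : ι => a) (s := s) (hcard.le.trans (min_le_left _ _))
    simpa [Finset.sum_const, hcard, nsmul_eq_mul] using this

lemma exists_card_sum_ge {d : ℕ} (f : Fin d → ℝ) (hsum : ∑ i, f i = 1) :
    ∀ k : ℕ, k ≤ d → ∃ s : Finset (Fin d), s.card = k ∧ (k : ℝ) / d ≤ ∑ i ∈ s, f i := by
  intro k
  induction k with
  | zero => intro _; exact ⟨∅, rfl, by simp⟩
  | succ k ih =>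
    intro hk
    obtain ⟨s, hcard, hge⟩ := ih (Nat.le_of_succ_le hk)
    have hdpos : (0:ℝ) < d := by
      have : 0 < d := by omega
      exact_mod_cast this
    have hdk1 : (k:ℝ) + 1 ≤ (d:ℝ) := by exact_mod_cast hk
    have hcompl : (sᶜ : Finset (Fin d)).Nonempty := by
      rw [← Finset.card_pos, Finset.card_compl, Fintype.card_fin, hcard]; omega
    have hsplit : ∑ i ∈ sᶜ, f i = 1 - ∑ i ∈ s, f i := by
      have := Finset.sum_add_sum_compl s f
      rw [hsum] at this; linarith
    have havg : ∑ i ∈ sᶜ, ((1 - ∑ j ∈ s, f j) / ((d:ℝ) - k)) ≤ ∑ i ∈ sᶜ, f i := by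
      rw [Finset.sum_const, Finset.card_compl, Fintype.card_fin, hcard, nsmul_eq_mul,
        hsplit]
      have hdk : ((d - k : ℕ) : ℝ) = (d:ℝ) - k := by
        have : k ≤ d := by omega
        push_cast [this]; ring
      rw [hdk, mul_div_cancel₀]
      linarith
    obtain ⟨i, hi, hfi⟩ := Finset.exists_le_of_sum_le hcompl havg
    have hins : i ∉ s := Finset.mem_compl.mp hi
    refine ⟨insert i s, ?_, ?_⟩
    · rw [Finset.card_insert_of_notMem hins, hcard]
    · rw [Finset.sum_insert hins]
      set t := ∑ j ∈ s, f j with ht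
      have hDK : (0:ℝ) < (d:ℝ) - k := by linarith
      have expand : (1 - t)/((d:ℝ)-k) + t - ((k:ℝ)+1)/d
          = ((d:ℝ) - k - 1)*(t*d - k)/(((d:ℝ)-k)*d) := by
        field_simp
        ring
      have h1 : 0 ≤ ((d:ℝ) - k - 1)*(t*d - k) := by
        apply mul_nonneg
        · linarith
        · rw [div_le_iff₀ hdpos] at hge
          linarith
      have h2 : 0 ≤ ((d:ℝ) - k - 1)*(t*d - k)/(((d:ℝ)-k)*d) :=
        div_nonneg h1 (by positivity)
      have : ((k:ℝ)+1)/d ≤ (1 - t)/((d:ℝ)-k) + t := by linarith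
      push_cast
      linarith

lemma min_div_le_sumTopK {d : ℕ} (hd : 0 < d) (k : ℕ) (f : Fin d → ℝ)
    (hf : ∀ i, 0 ≤ f i) (hsum : ∑ i, f i = 1) :
    (min k d : ℕ) * ((d:ℝ))⁻¹ ≤ sumTopK k f := by
  rcases le_or_gt k d with h | h
  · obtain ⟨s, hcard, hge⟩ := exists_card_sum_ge f hsum k h
    refine le_trans ?_ (le_sumTopK k f hcard.le)
    rw [min_eq_left h]
    rw [div_eq_mul_inv] at hge
    exact hge
  · rw [min_eq_right h.le]
    have : ((d:ℕ):ℝ) * ((d:ℝ))⁻¹ = 1 := by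
      field_simp
    rw [this, ← hsum]
    exact sum_le_sumTopK k f (by simp [h.le])

end AuxSum
section AuxEig
variable {d : ℕ}

lemma trace_eq_sum_eigen {A : Mat d} (hA : A.IsHermitian) :
    A.trace = ∑ i, (hA.eigenvalues i : ℂ) := by
  conv_lhs => rw [hA.spectral_theorem, Unitary.conjStarAlgAut_apply]
  rw [Matrix.trace_mul_comm, ← mul_assoc]
  have h1 : star (hA.eigenvectorUnitary : Mat d) * (hA.eigenvectorUnitary : Mat d) = 1 :=
    Matrix.mem_unitaryGroup_iff'.mp (hA.eigenvectorUnitary).2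
  rw [h1, one_mul, Matrix.trace_diagonal]
  rfl

lemma density_sum_eigen {A : Mat d} (hA : IsDensity A) :
    ∑ i, hA.1.1.eigenvalues i = 1 := by
  have h := trace_eq_sum_eigen hA.1.1
  have h2 : ((∑ i, hA.1.1.eigenvalues i : ℝ) : ℂ) = 1 := by
    push_cast
    rw [← h, hA.2]
  exact_mod_cast h2

lemma kyFan_eq {k : ℕ} {A : Mat d} (hA : A.IsHermitian) :
    kyFan k A = sumTopK k hA.eigenvalues := dif_pos hA

lemma uniform_isHermitian (d : ℕ) : ((d:ℂ)⁻¹ • 1 : Mat d).IsHermitian := by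
  unfold Matrix.IsHermitian
  rw [Matrix.conjTranspose_smul, Matrix.conjTranspose_one]
  congr 1
  simp

lemma eigen_uniform (hd : 0 < d) (h : ((d:ℂ)⁻¹ • 1 : Mat d).IsHermitian) (i : Fin d) :
    h.eigenvalues i = (d:ℝ)⁻¹ := by
  have hv := h.mulVec_eigenvectorBasis i
  rw [Matrix.smul_mulVec, Matrix.one_mulVec] at hv
  have hne : ⇑(h.eigenvectorBasis i) ≠ 0 := by
    intro hc
    exact h.eigenvectorBasis.orthonormal.ne_zero i
      (by ext j; exact congrFun hc j)
  obtain ⟨j, hj⟩ := Function.ne_iff.mp hne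
  simp only [Pi.zero_apply] at hj
  have hvj := congrFun hv j
  simp only [Pi.smul_apply, smul_eq_mul, Complex.real_smul] at hvj
  have h0 := sub_eq_zero.mpr hvj
  rw [← sub_mul] at h0
  rcases mul_eq_zero.mp h0 with h1 | h1
  · have h2 : ((d:ℂ)⁻¹ : ℂ) = ((h.eigenvalues i : ℝ) : ℂ) := sub_eq_zero.mp h1
    have h3 : ((d:ℝ)⁻¹ : ℂ) = ((h.eigenvalues i : ℝ) : ℂ) := by
      rw [← h2]; push_cast; ring
    exact_mod_cast h3.symm
  · exact absurd h1 hj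

lemma kyFan_uniform (hd : 0 < d) (k : ℕ) :
    kyFan k ((d:ℂ)⁻¹ • 1 : Mat d) = (min k d : ℕ) * ((d:ℝ))⁻¹ := by
  rw [kyFan_eq (uniform_isHermitian d)]
  have : (uniform_isHermitian d).eigenvalues = fun _ : Fin d => (d:ℝ)⁻¹ :=
    funext (eigen_uniform hd _)
  rw [this, sumTopK_const k (by positivity)]
  simp

end AuxEig
section AuxProj
variable {d : ℕ}

lemma projv_herm (v : Fin d → ℂ) : (projv v)ᴴ = projv v := by
  ext i j
  simp [projv, Matrix.conjTranspose_apply, mul_comm]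

lemma projv_mul_self {v : Fin d → ℂ} (hv : ∑ i, star (v i) * v i = 1) :
    projv v * projv v = projv v := by
  ext i j
  rw [Matrix.mul_apply]
  calc ∑ k, projv v i k * projv v k j
      = (∑ k, star (v k) * v k) * (v i * star (v j)) := by
        rw [Finset.sum_mul]
        exact Finset.sum_congr rfl fun k _ => by simp [projv]; ring
    _ = projv v i j := by rw [hv, one_mul]; rfl

lemma measW_unitary {v : Fin d → Fin d → ℂ} (hv : IsRankOneMeas v) :
    (Matrix.of fun i j => v j i)ᴴ * (Matrix.of fun i j => v j i) = 1 := by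
  ext z z'
  simpa [Matrix.mul_apply, Matrix.conjTranspose_apply, Matrix.one_apply] using hv z z'

lemma sum_projv {v : Fin d → Fin d → ℂ} (hv : IsRankOneMeas v) :
    ∑ j, projv (v j) = 1 := by
  have h2 := mul_eq_one_comm.mp (measW_unitary hv)
  ext i i'
  have h3 := congrFun (congrFun h2 i) i'
  simp only [Matrix.mul_apply, Matrix.conjTranspose_apply, Matrix.of_apply] at h3
  rw [Matrix.sum_apply]
  show (∑ j, projv (v j) i i') = (1 : Mat d) i i'
  simpa [projv] using h3

lemma pinch_posSemidef {v : Fin d → Fin d → ℂ} {ρ : Mat d} (hρ : ρ.PosSemidef) :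
    (∑ j, projv (v j) * ρ * projv (v j)).PosSemidef := by
  apply Finset.sum_induction
  · exact fun a b ha hb => ha.add hb
  · exact Matrix.PosSemidef.zero
  · intro j _
    have := hρ.mul_mul_conjTranspose_same (projv (v j))
    rwa [projv_herm] at this

lemma pinch_density {v : Fin d → Fin d → ℂ} (hv : IsRankOneMeas v) {ρ : Mat d}
    (hρ : IsDensity ρ) : IsDensity (∑ j, projv (v j) * ρ * projv (v j)) := by
  refine ⟨pinch_posSemidef hρ.1, ?_⟩
  rw [Matrix.trace_sum]
  have hP : ∀ j, (projv (v j) * ρ * projv (v j)).trace = (projv (v j) * ρ).trace := by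
    intro j
    have hvj : ∑ i, star (v j i) * v j i = 1 := by simpa using hv j j
    rw [Matrix.trace_mul_comm, ← mul_assoc, projv_mul_self hvj]
  calc ∑ j, (projv (v j) * ρ * projv (v j)).trace
      = ∑ j, (projv (v j) * ρ).trace := by simp [hP]
    _ = ((∑ j, projv (v j)) * ρ).trace := by rw [Finset.sum_mul, Matrix.trace_sum]
    _ = 1 := by rw [sum_projv hv, one_mul, hρ.2]

lemma pinch_uniform (W σ : Mat d) (hWW : W * Wᴴ = 1)
    (hdiag : ∀ j, (Wᴴ * σ * W) j j = (d:ℂ)⁻¹) :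
    ∑ j, projv (fun i => W i j) * σ * projv (fun i => W i j) = (d:ℂ)⁻¹ • (1 : Mat d) := by
  ext i i'
  have hentry : ∀ j, (projv (fun i => W i j) * σ * projv (fun i => W i j)) i i'
      = (Wᴴ * σ * W) j j * (W i j * star (W i' j)) := by
    intro j
    rw [Matrix.mul_apply]
    have h1 : ∀ b, (projv (fun i => W i j) * σ) i b = W i j * ∑ a, star (W a j) * σ a b := by
      intro b
      rw [Matrix.mul_apply, Finset.mul_sum]
      exact Finset.sum_congr rfl fun a _ => by simp [projv]; ring
    calc ∑ b, (projv (fun i => W i j) * σ) i b * projv (fun i => W i j) b i'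
        = ∑ b, (W i j * ∑ a, star (W a j) * σ a b) * (W b j * star (W i' j)) := by
          exact Finset.sum_congr rfl fun b _ => by rw [h1 b]; rfl
      _ = (∑ b, (∑ a, star (W a j) * σ a b) * W b j) * (W i j * star (W i' j)) := by
          rw [Finset.sum_mul]
          exact Finset.sum_congr rfl fun b _ => by ring
      _ = (Wᴴ * σ * W) j j * (W i j * star (W i' j)) := by
          simp only [Matrix.mul_apply, Matrix.conjTranspose_apply]
  have hsum : (∑ j, projv (fun i => W i j) * σ * projv (fun i => W i j)) i i'
      = ∑ j, (Wᴴ * σ * W) j j * (W i j * star (W i' j)) := by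
    rw [Matrix.sum_apply]
    exact Finset.sum_congr rfl fun j _ => hentry j
  rw [hsum]
  have : ∑ j, (Wᴴ * σ * W) j j * (W i j * star (W i' j))
      = (d:ℂ)⁻¹ * ∑ j, W i j * star (W i' j) := by
    rw [Finset.mul_sum]
    exact Finset.sum_congr rfl fun j _ => by rw [hdiag j]
  rw [this]
  have hWWe := congrFun (congrFun hWW i) i'
  simp only [Matrix.mul_apply, Matrix.conjTranspose_apply] at hWWe
  rw [hWWe]
  simp [Matrix.one_apply]

end AuxProj
section AuxFourier
open Complex

lemma exists_uniform_pinch {d : ℕ} (hd : 0 < d) {σ : Mat d} (hσ : IsDensity σ) :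
    ∃ v : Fin d → Fin d → ℂ, IsRankOneMeas v ∧
      ∑ j, projv (v j) * σ * projv (v j) = (d:ℂ)⁻¹ • (1 : Mat d) := by
  set ω : ℂ := Complex.exp (2 * Real.pi * Complex.I / d) with hω
  have hprim : IsPrimitiveRoot ω d := Complex.isPrimitiveRoot_exp d hd.ne'
  have hωd : ω ^ d = 1 := hprim.pow_eq_one
  have hω0 : ω ≠ 0 := Complex.exp_ne_zero _
  have hωstar : star ω * ω = 1 := by
    have harg : (starRingEnd ℂ) (2 * (Real.pi:ℂ) * Complex.I / d)
        = -(2 * (Real.pi:ℂ) * Complex.I / d) := by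
      have h1 : (starRingEnd ℂ) (2 : ℂ) = 2 := Complex.conj_ofNat 2
      have h2 : (starRingEnd ℂ) ((Real.pi : ℂ)) = (Real.pi : ℂ) := Complex.conj_ofReal _
      have h3 : (starRingEnd ℂ) ((d : ℂ)) = (d : ℂ) := by
        rw [← Complex.ofReal_natCast]; exact Complex.conj_ofReal _
      rw [map_div₀, _root_.map_mul, _root_.map_mul, Complex.conj_I, h1, h2, h3]
      ring
    rw [hω]
    show (starRingEnd ℂ) _ * _ = 1
    rw [← Complex.exp_conj, harg, ← Complex.exp_add, neg_add_cancel]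
    exact Complex.exp_zero
  have hωsm : ∀ m : ℕ, star (ω ^ m) * ω ^ m = 1 := by
    intro m
    rw [star_pow, ← mul_pow, hωstar, one_pow]
  set c : ℂ := ((Real.sqrt d : ℝ) : ℂ)⁻¹ with hc
  have hcstar : star c = c := by
    rw [hc, star_inv₀]
    congr 1
    exact Complex.conj_ofReal _
  have hcc : c * c = (d:ℂ)⁻¹ := by
    rw [hc, ← mul_inv]
    congr 1
    rw [← Complex.ofReal_mul, Real.mul_self_sqrt (by positivity)]
    simp
  set F : Mat d := Matrix.of (fun k j : Fin d => c * ω ^ ((k : ℕ) * (j : ℕ))) with hF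
  set U : Mat d := (hσ.1.1.eigenvectorUnitary : Mat d) with hU
  have hUU : Uᴴ * U = 1 := by
    rw [← Matrix.star_eq_conjTranspose]
    exact Matrix.mem_unitaryGroup_iff'.mp (hσ.1.1.eigenvectorUnitary).2
  have hFF : Fᴴ * F = 1 := by
    ext z z'
    rw [Matrix.mul_apply, Matrix.one_apply]
    have hterm : ∀ k : Fin d, Fᴴ z k * F k z'
        = (d:ℂ)⁻¹ * ((ω ^ (z:ℕ))⁻¹ * ω ^ ((z':ℕ))) ^ (k:ℕ) := by
      intro k
      rw [Matrix.conjTranspose_apply]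
      show star (c * ω ^ ((k:ℕ) * (z:ℕ))) * (c * ω ^ ((k:ℕ) * (z':ℕ))) = _
      rw [star_mul', hcstar]
      have h1 : star (ω ^ ((k:ℕ) * (z:ℕ))) = (ω ^ ((k:ℕ) * (z:ℕ)))⁻¹ := by
        have := hωsm ((k:ℕ) * (z:ℕ))
        field_simp at this ⊢
        linear_combination this
      rw [h1]
      rw [mul_comm ((k:ℕ)) ((z:ℕ)), mul_comm ((k:ℕ)) ((z':ℕ)), pow_mul, pow_mul]
      calc c * ((ω ^ (z:ℕ)) ^ (k:ℕ))⁻¹ * (c * (ω ^ ((z':ℕ))) ^ (k:ℕ))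
          = (c * c) * (((ω ^ (z:ℕ)) ^ (k:ℕ))⁻¹ * (ω ^ ((z':ℕ))) ^ (k:ℕ)) := by ring
        _ = (d:ℂ)⁻¹ * ((ω ^ (z:ℕ))⁻¹ * ω ^ ((z':ℕ))) ^ (k:ℕ) := by
            rw [hcc, mul_pow, inv_pow]
    rw [Finset.sum_congr rfl fun k _ => hterm k, ← Finset.mul_sum]
    set ζ : ℂ := (ω ^ (z:ℕ))⁻¹ * ω ^ ((z':ℕ)) with hζ
    by_cases hzz : z = z'
    · subst hzz
      rw [show ζ = 1 by rw [hζ]; exact inv_mul_cancel₀ (pow_ne_zero _ hω0)]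
      simp [Finset.card_univ]
      exact inv_mul_cancel₀ (by exact_mod_cast hd.ne')
    · have hζd : ζ ^ d = 1 := by
        rw [hζ, mul_pow, inv_pow, ← pow_mul, ← pow_mul, mul_comm ((z:ℕ)) d,
          mul_comm ((z':ℕ)) d, pow_mul, pow_mul, hωd, one_pow, one_pow]
        simp
      have hζ1 : ζ ≠ 1 := by
        intro hone
        have : ω ^ ((z':ℕ)) = ω ^ ((z:ℕ)) := by
          rw [hζ] at hone
          field_simp at hone
          linear_combination hone
        exact hzz (Fin.ext (hprim.pow_inj z.isLt z'.isLt this.symm))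
      have : ∑ k : Fin d, ζ ^ (k:ℕ) = 0 := by
        rw [Fin.sum_univ_eq_sum_range (fun n => ζ ^ n) d, geom_sum_eq hζ1, hζd]
        simp
      rw [this, if_neg hzz, mul_zero]
  set W : Mat d := U * F with hW
  have hWW' : Wᴴ * W = 1 := by
    rw [hW, Matrix.conjTranspose_mul, mul_assoc, ← mul_assoc Uᴴ, hUU, one_mul, hFF]
  have hWW : W * Wᴴ = 1 := mul_eq_one_comm.mp hWW'
  have hdiagU : Uᴴ * σ * U = Matrix.diagonal (RCLike.ofReal ∘ hσ.1.1.eigenvalues) := by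
    rw [← Matrix.star_eq_conjTranspose]
    have := hσ.1.1.conjStarAlgAut_star_eigenvectorUnitary
    rw [Unitary.conjStarAlgAut_apply, Unitary.coe_star, star_star] at this
    exact this
  have hdiag : ∀ j, (Wᴴ * σ * W) j j = (d:ℂ)⁻¹ := by
    intro j
    have hre : Wᴴ * σ * W = Fᴴ * (Uᴴ * σ * U) * F := by
      rw [hW, Matrix.conjTranspose_mul]
      simp only [Matrix.mul_assoc]
    rw [hre, hdiagU]
    rw [Matrix.mul_apply]
    have hterm : ∀ k, ((Fᴴ * Matrix.diagonal (RCLike.ofReal ∘ hσ.1.1.eigenvalues) : Mat d)) j k * F k j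
        = (d:ℂ)⁻¹ * ((hσ.1.1.eigenvalues k : ℝ) : ℂ) := by
      intro k
      rw [Matrix.mul_diagonal, Matrix.conjTranspose_apply]
      show star (c * ω ^ ((k:ℕ) * (j:ℕ))) * _ * (c * ω ^ ((k:ℕ) * (j:ℕ))) = _
      rw [star_mul', hcstar]
      have := hωsm ((k:ℕ) * (j:ℕ))
      calc c * star (ω ^ ((k:ℕ) * (j:ℕ))) * (RCLike.ofReal ∘ hσ.1.1.eigenvalues) k
            * (c * ω ^ ((k:ℕ) * (j:ℕ)))
          = (c * c) * (star (ω ^ ((k:ℕ) * (j:ℕ))) * ω ^ ((k:ℕ) * (j:ℕ)))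
            * (RCLike.ofReal ∘ hσ.1.1.eigenvalues) k := by ring
        _ = (d:ℂ)⁻¹ * ((hσ.1.1.eigenvalues k : ℝ) : ℂ) := by
            rw [hcc, this, mul_one]
            rfl
    rw [Finset.sum_congr rfl fun k _ => hterm k, ← Finset.mul_sum]
    have : ∑ k, ((hσ.1.1.eigenvalues k : ℝ) : ℂ) = 1 := by
      rw [← Complex.ofReal_sum, density_sum_eigen hσ]
      simp
    rw [this, mul_one]
  refine ⟨fun j i => W i j, ?_, ?_⟩
  · intro z z'
    have := congrFun (congrFun hWW' z) z'
    simp only [Matrix.mul_apply, Matrix.conjTranspose_apply, Matrix.one_apply] at this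
    simpa using this
  · exact pinch_uniform W σ hWW hdiag
end AuxFourier
section AuxGame
variable {d c : ℕ}

/-- The value of the trivial-B game on a single-system state. -/
def Gq (T : Matrix (Fin d) (Fin c) ℝ) (M : Mat d) : ℝ :=
  ⨆ z' : Fin c, ∑ w, T w z' * kyFan (w.1 + 1) M

instance trivMeasNonempty : Nonempty {u : Fin 1 → Fin 1 → ℂ // IsRankOneMeas u} := by
  refine ⟨⟨fun _ _ => 1, ?_⟩⟩
  intro z z'
  have : z = z' := Subsingleton.elim z z'
  simp [this]

lemma projv_triv {u : Fin 1 → Fin 1 → ℂ} (hu : IsRankOneMeas u) (z : Fin 1) :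
    projv (u z) = (1 : Mat 1) := by
  have h := hu z z
  simp at h
  have h' : u z 0 * star (u z 0) = 1 := by rw [mul_comm]; simpa using h
  ext i j
  fin_cases i <;> fin_cases j
  simpa [projv, Matrix.one_apply] using h'

lemma ptraceB_kron_one (X : Mat d) : ptraceB (X ⊗ₖ (1 : Mat 1)) = X := by
  ext i i'
  simp [ptraceB, Matrix.kroneckerMap_apply, Matrix.one_apply]

lemma R0_trivB (hc : 0 < c) (T : Matrix (Fin d) (Fin c) ℝ) (X : Mat d) :
    R0 T (X ⊗ₖ (1 : Mat 1)) = Gq T X := by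
  unfold R0 Gq
  have hstep : ∀ u : {u : Fin 1 → Fin 1 → ℂ // IsRankOneMeas u},
      (⨆ f : Fin 1 → Fin c, ∑ z, ∑ w, T w (f z) * kyFan (w.1 + 1)
        (ptraceB (((1 : Mat d) ⊗ₖ projv (u.1 z)) * (X ⊗ₖ (1 : Mat 1)) *
          ((1 : Mat d) ⊗ₖ projv (u.1 z)))))
      = ⨆ z' : Fin c, ∑ w, T w z' * kyFan (w.1 + 1) X := by
    intro u
    have h1 : ∀ f : Fin 1 → Fin c,
        (∑ z, ∑ w, T w (f z) * kyFan (w.1 + 1)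
          (ptraceB (((1 : Mat d) ⊗ₖ projv (u.1 z)) * (X ⊗ₖ (1 : Mat 1)) *
            ((1 : Mat d) ⊗ₖ projv (u.1 z)))))
        = ∑ w, T w (f 0) * kyFan (w.1 + 1) X := by
      intro f
      rw [Fin.sum_univ_one]
      congr 1
      ext w
      congr 2
      rw [projv_triv u.2, Matrix.one_kronecker_one, one_mul, mul_one, ptraceB_kron_one]
    exact (iSup_congr h1).trans
      (Function.Surjective.iSup_comp (f := fun f : Fin 1 → Fin c => f 0)
        (fun z => ⟨fun _ => z, rfl⟩) (fun z' => ∑ w, T w z' * kyFan (w.1 + 1) X))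
  exact (iSup_congr hstep).trans ciSup_const

lemma pinch_kron (v : Fin d → Fin d → ℂ) (X : Mat d) :
    (∑ j, (projv (v j) ⊗ₖ (1 : Mat 1)) * (X ⊗ₖ (1 : Mat 1)) * (projv (v j) ⊗ₖ (1 : Mat 1)))
      = (∑ j, projv (v j) * X * projv (v j)) ⊗ₖ (1 : Mat 1) := by
  have h1 : ∀ j, (projv (v j) ⊗ₖ (1 : Mat 1)) * (X ⊗ₖ (1 : Mat 1)) *
      (projv (v j) ⊗ₖ (1 : Mat 1)) = (projv (v j) * X * projv (v j)) ⊗ₖ (1 : Mat 1) := by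
    intro j
    rw [← Matrix.mul_kronecker_mul, ← Matrix.mul_kronecker_mul, one_mul, one_mul]
  rw [Finset.sum_congr rfl fun j _ => h1 j]
  ext p q
  simp [Matrix.kroneckerMap_apply, Matrix.sum_apply, Finset.sum_mul]

lemma Rgame_trivB (hc : 0 < c) (T : Matrix (Fin d) (Fin c) ℝ) (p : ℝ) (X : Mat d) :
    Rgame T p (X ⊗ₖ (1 : Mat 1))
      = p * (⨅ v : {v : Fin d → Fin d → ℂ // IsRankOneMeas v},
          Gq T (∑ j, projv (v.1 j) * X * projv (v.1 j))) + (1 - p) * Gq T X := by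
  unfold Rgame
  rw [R0_trivB hc]
  congr 2
  refine iInf_congr fun v => ?_
  rw [pinch_kron, R0_trivB hc]
end AuxGame
section AuxFinal
variable {d c : ℕ}

instance measNonempty (d : ℕ) : Nonempty {v : Fin d → Fin d → ℂ // IsRankOneMeas v} := by
  refine ⟨⟨fun z i => if i = z then 1 else 0, ?_⟩⟩
  intro z z'
  have : ∀ i : Fin d, star (if i = z then (1:ℂ) else 0) * (if i = z' then 1 else 0)
      = if i = z ∧ i = z' then 1 else 0 := by
    intro i
    by_cases h1 : i = z <;> by_cases h2 : i = z' <;> simp [h1, h2]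
  rw [Finset.sum_congr rfl fun i _ => this i]
  by_cases h : z = z'
  · subst h
    simp
  · rw [if_neg h]
    apply Finset.sum_eq_zero
    intro i _
    rw [if_neg]
    rintro ⟨rfl, rfl⟩
    exact h rfl

lemma Gq_mono (hc : 0 < c) (T : Matrix (Fin d) (Fin c) ℝ) (hT : ColStochastic T)
    {M N : Mat d} (h : ∀ w : Fin d, kyFan (w.1 + 1) M ≤ kyFan (w.1 + 1) N) :
    Gq T M ≤ Gq T N := by
  haveI : Nonempty (Fin c) := ⟨⟨0, hc⟩⟩
  refine ciSup_le fun z' => ?_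
  refine le_trans ?_ (le_ciSup (Set.Finite.bddAbove (Set.finite_range _)) z')
  exact Finset.sum_le_sum fun w _ => mul_le_mul_of_nonneg_left (h w) (hT.1 w z')

lemma kyFan_uniform_le {k : ℕ} (hd : 0 < d) {M : Mat d} (hM : IsDensity M) :
    kyFan k ((d:ℂ)⁻¹ • 1 : Mat d) ≤ kyFan k M := by
  rw [kyFan_uniform hd, kyFan_eq hM.1.1]
  exact min_div_le_sumTopK hd k _ (fun i => hM.1.eigenvalues_nonneg i)
    (density_sum_eigen hM)

lemma iInf_pinch (hd : 0 < d) (hc : 0 < c) (T : Matrix (Fin d) (Fin c) ℝ)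
    (hT : ColStochastic T) {X : Mat d} (hX : IsDensity X) :
    (⨅ v : {v : Fin d → Fin d → ℂ // IsRankOneMeas v},
        Gq T (∑ j, projv (v.1 j) * X * projv (v.1 j))) = Gq T ((d:ℂ)⁻¹ • 1) := by
  have hlow : ∀ v : {v : Fin d → Fin d → ℂ // IsRankOneMeas v},
      Gq T ((d:ℂ)⁻¹ • 1) ≤ Gq T (∑ j, projv (v.1 j) * X * projv (v.1 j)) := by
    intro v
    exact Gq_mono hc T hT fun w => kyFan_uniform_le hd (pinch_density v.2 hX)
  refine le_antisymm ?_ (le_ciInf hlow)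
  obtain ⟨v₀, hv₀, hpm⟩ := exists_uniform_pinch hd hX
  have hb : BddBelow (Set.range fun v : {v : Fin d → Fin d → ℂ // IsRankOneMeas v} =>
      Gq T (∑ j, projv (v.1 j) * X * projv (v.1 j))) := by
    refine ⟨Gq T ((d:ℂ)⁻¹ • 1), ?_⟩
    rintro x ⟨v, rfl⟩
    exact hlow v
  refine le_trans (ciInf_le hb ⟨v₀, hv₀⟩) ?_
  rw [hpm]
end AuxFinal
/-- with trivial `B`, game-majorization reduces to eigenvalue majorization. -/
theorem trivialB_game_majorization_iff {d : ℕ} (hd : 0 < d)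
    (ρ σ : Mat d) (hρ : IsDensity ρ) (hσ : IsDensity σ) :
    (∀ (c : ℕ), 0 < c → ∀ T : Matrix (Fin d) (Fin c) ℝ, ColStochastic T →
        ∀ p : ℝ, 0 ≤ p → p ≤ 1 →
          Rgame T p (σ ⊗ₖ (1 : Mat 1)) ≤ Rgame T p (ρ ⊗ₖ (1 : Mat 1))) ↔
      ∀ k : ℕ, sumTopK k hσ.1.1.eigenvalues ≤ sumTopK k hρ.1.1.eigenvalues := by
  constructor
  · intro hgame k
    rcases Nat.eq_zero_or_pos k with rfl | hk1
    · rw [sumTopK_zero, sumTopK_zero]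
    rcases le_or_gt k d with hkd | hkd
    · set kk : Fin d := ⟨k - 1, by omega⟩ with hkk
      set T : Matrix (Fin d) (Fin 1) ℝ := Matrix.of (fun w _ => if w = kk then 1 else 0)
        with hTdef
      have hT : ColStochastic T := by
        constructor
        · intro w z
          simp only [hTdef, Matrix.of_apply]
          split <;> norm_num
        · intro z
          simp [hTdef]
      have h := hgame 1 one_pos T hT 0 le_rfl zero_le_one
      rw [Rgame_trivB one_pos, Rgame_trivB one_pos] at h
      simp only [zero_mul, zero_add, sub_zero, one_mul] at h
      have hGq : ∀ (X : Mat d) (hX : X.IsHermitian), Gq T X = sumTopK k hX.eigenvalues := by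
        intro X hX
        unfold Gq
        rw [ciSup_unique]
        have hsummand : ∀ w : Fin d, T w default * kyFan (w.1 + 1) X
            = if w = kk then kyFan (w.1 + 1) X else 0 := by
          intro w
          simp only [hTdef, Matrix.of_apply]
          split <;> ring
        rw [Finset.sum_congr rfl fun w _ => hsummand w,
          Finset.sum_ite_eq' Finset.univ kk (fun w => kyFan (w.1 + 1) X),
          if_pos (Finset.mem_univ kk)]
        have hk : kk.1 + 1 = k := by
          simp only [hkk]
          omega
        rw [hk, kyFan_eq hX]
      rwa [hGq σ hσ.1.1, hGq ρ hρ.1.1] at h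
    · have e : ∀ (X : Mat d) (hX : IsDensity X), sumTopK k hX.1.1.eigenvalues = 1 := by
        intro X hX
        refine le_antisymm ?_ ?_
        · rw [← density_sum_eigen hX]
          exact sumTopK_le_sum _ _ (fun i => hX.1.eigenvalues_nonneg i)
        · rw [← density_sum_eigen hX]
          exact sum_le_sumTopK _ _ (by simp; omega)
      rw [e σ hσ, e ρ hρ]
  · intro hmaj c hc T hT p hp0 hp1
    rw [Rgame_trivB hc, Rgame_trivB hc]
    rw [iInf_pinch hd hc T hT hσ, iInf_pinch hd hc T hT hρ]
    have hG : Gq T σ ≤ Gq T ρ := by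
      refine Gq_mono hc T hT fun w => ?_
      rw [kyFan_eq hσ.1.1, kyFan_eq hρ.1.1]
      exact hmaj (w.1 + 1)
    have h1p : 0 ≤ 1 - p := by linarith
    exact add_le_add le_rfl (mul_le_mul_of_nonneg_left hG h1p)

end
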